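/- With the oscillator operators L_n defined from the family (J_n) with parameters (λ, q), for all n, m ∈ ℤ and all v ∈ V one has (L_n ∘ L_m − L_m ∘ L_n)(v) = (n − m)·L_{n+m}(v) + δ_{n+m,0}·((n³ − n)/12)·(1 + 12λ²)·v. That is, the operators L_n satisfy the Virasoro commutation relations with central charge c = 1 + 12λ² acting as the scalar 1 + 12λ². -/

import Mathlib

open scoped BigOperators

/-- Normal ordered product `:J_i J_j:`. -/
noncomputable def normalOrder {V : Type*} [AddCommGroup V] [Module ℂ V]
    (J : ℤ → Module.End ℂ V) (i j : ℤ) : Module.End ℂ V :=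
  if i ≤ j then J i * J j else J j * J i

section Aux

open Function

variable {V : Type*} [AddCommGroup V] [Module ℂ V] {J : ℤ → Module.End ℂ V}

/-- Twice the quadratic part of the Virasoro operator. -/
noncomputable def Bop (J : ℤ → Module.End ℂ V) (n : ℤ) (v : V) : V :=
  ∑ᶠ j : ℤ, normalOrder J (-j) (j + n) v

lemma Jcomm (hcomm : ∀ n m : ℤ, J n * J m - J m * J n =
      if n + m = 0 then (n : ℂ) • (1 : Module.End ℂ V) else 0)
    (a b : ℤ) (v : V) :
    J a (J b v) = J b (J a v) + (if a + b = 0 then (a : ℂ) • v else 0) := by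
  have h := LinearMap.congr_fun (hcomm a b) v
  simp only [LinearMap.sub_apply, Module.End.mul_apply] at h
  have h2 : (if a + b = 0 then (a : ℂ) • (1 : Module.End ℂ V) else 0) v
      = (if a + b = 0 then (a : ℂ) • v else 0) := by
    split_ifs <;> simp
  rw [h2] at h
  exact sub_eq_iff_eq_add.mp h |>.trans (by abel)

lemma prod_no (hcomm : ∀ n m : ℤ, J n * J m - J m * J n =
      if n + m = 0 then (n : ℂ) • (1 : Module.End ℂ V) else 0)
    {a b s : ℤ} (hs : a + b = s) (v : V) :
    J a (J b v) = normalOrder J a b v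
      + (if s = 0 ∧ b < a then (a : ℂ) • v else 0) := by
  subst hs
  by_cases hab : a ≤ b
  · rw [normalOrder, if_pos hab, if_neg (by rintro ⟨-, h⟩; omega), Module.End.mul_apply, add_zero]
  · rw [normalOrder, if_neg hab, Module.End.mul_apply, Jcomm hcomm]
    congr 1
    have hba : b < a := by omega
    split_ifs with h1 h2 h2 <;> first | rfl | (exfalso; omega) | (exact absurd ⟨h1, hba⟩ h2)

lemma no_supp (hloc : ∀ v : V, ∃ N : ℕ, ∀ n : ℤ, (N : ℤ) ≤ n → J n v = 0)
    (n : ℤ) (v : V) :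
    (Function.support fun j : ℤ => normalOrder J (-j) (j + n) v).Finite := by
  obtain ⟨N, hN⟩ := hloc v
  apply Set.Finite.subset (Set.finite_Icc (-((N : ℤ) + |n| + 1)) ((N : ℤ) + |n| + 1))
  rw [Function.support_subset_iff']
  intro j hj
  simp only [Set.mem_Icc, not_and_or, not_le] at hj
  have habs1 : -|n| ≤ n := neg_abs_le n
  have habs2 : n ≤ |n| := le_abs_self n
  rcases hj with h | h
  · rw [normalOrder, if_neg (by omega), Module.End.mul_apply, hN (-j) (by omega), map_zero]
  · rw [normalOrder, if_pos (by omega), Module.End.mul_apply, hN (j + n) (by omega), map_zero]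

lemma Bop_zero (n : ℤ) : Bop J n (0 : V) = 0 := by
  unfold Bop
  simp only [map_zero, finsum_zero]

lemma Bop_add (hloc : ∀ v : V, ∃ N : ℕ, ∀ n : ℤ, (N : ℤ) ≤ n → J n v = 0)
    (n : ℤ) (x y : V) : Bop J n (x + y) = Bop J n x + Bop J n y := by
  unfold Bop
  rw [← finsum_add_distrib (no_supp hloc n x) (no_supp hloc n y)]
  exact finsum_congr fun j => map_add _ x y

lemma Bop_smul (hloc : ∀ v : V, ∃ N : ℕ, ∀ n : ℤ, (N : ℤ) ≤ n → J n v = 0)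
    (n : ℤ) (c : ℂ) (x : V) : Bop J n (c • x) = c • Bop J n x := by
  unfold Bop
  rw [smul_finsum' c (no_supp hloc n x)]
  exact finsum_congr fun j => map_smul _ c x

lemma JJcomm (hcomm : ∀ n m : ℤ, J n * J m - J m * J n =
      if n + m = 0 then (n : ℂ) • (1 : Module.End ℂ V) else 0)
    (a b k : ℤ) (v : V) :
    J a (J b (J k v)) - J k (J a (J b v)) =
      (if b + k = 0 then (b : ℂ) • J a v else 0)
        + (if a + k = 0 then (a : ℂ) • J b v else 0) := by
  rw [Jcomm hcomm b k v, map_add, Jcomm hcomm a k (J b v)]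
  have : J a (if b + k = 0 then (b : ℂ) • v else 0)
      = (if b + k = 0 then (b : ℂ) • J a v else 0) := by
    split_ifs <;> simp
  rw [this]
  abel

lemma BJ (hcomm : ∀ n m : ℤ, J n * J m - J m * J n =
      if n + m = 0 then (n : ℂ) • (1 : Module.End ℂ V) else 0)
    (hloc : ∀ v : V, ∃ N : ℕ, ∀ n : ℤ, (N : ℤ) ≤ n → J n v = 0)
    (n k : ℤ) (v : V) :
    Bop J n (J k v) - J k (Bop J n v) = (-2 * k : ℂ) • J (n + k) v := by
  have h2 : J k (Bop J n v) = ∑ᶠ j : ℤ, J k (normalOrder J (-j) (j + n) v) :=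
    AddMonoidHom.map_finsum (J k).toAddMonoidHom (no_supp hloc n v)
  have h1 : Bop J n (J k v) = ∑ᶠ j : ℤ, normalOrder J (-j) (j + n) (J k v) := rfl
  have hsupp2 : (Function.support fun j : ℤ =>
      J k (normalOrder J (-j) (j + n) v)).Finite := by
    apply (no_supp hloc n v).subset
    intro j hj
    simp only [Function.mem_support] at hj ⊢
    intro h0
    exact hj (by rw [h0, map_zero])
  rw [h1, h2, ← finsum_sub_distrib (no_supp hloc n (J k v)) hsupp2]
  have key : ∀ j : ℤ, normalOrder J (-j) (j + n) (J k v) - J k (normalOrder J (-j) (j + n) v)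
      = (if j = -(n + k) then ((j + n : ℤ) : ℂ) • J (-j) v else 0)
        + (if j = k then ((-j : ℤ) : ℂ) • J (j + n) v else 0) := by
    intro j
    have hc1 : (j + n + k = 0) ↔ (j = -(n + k)) := by omega
    have hc2 : (-j + k = 0) ↔ (j = k) := by omega
    by_cases hab : -j ≤ j + n
    · rw [normalOrder, if_pos hab, Module.End.mul_apply, Module.End.mul_apply,
        JJcomm hcomm (-j) (j + n) k v]
      all_goals try rw [if_congr hc1 rfl rfl, if_congr hc2 rfl rfl]
      all_goals try push_cast
      all_goals try abel
    · rw [normalOrder, if_neg hab, Module.End.mul_apply, Module.End.mul_apply,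
        JJcomm hcomm (j + n) (-j) k v]
      all_goals try rw [if_congr hc1 rfl rfl, if_congr hc2 rfl rfl]
      all_goals try push_cast
      all_goals try abel
  rw [finsum_congr key]
  rw [finsum_add_distrib ?_ ?_]
  · rw [finsum_eq_single _ (-(n + k)) (fun x hx => if_neg hx),
      finsum_eq_single _ k (fun x hx => if_neg hx), if_pos rfl, if_pos rfl]
    have e1 : (-(n + k) + n : ℤ) = -k := by ring
    have e2 : (-(-(n + k)) : ℤ) = n + k := by ring
    rw [e1, e2, show k + n = n + k from add_comm k n, ← add_smul]
    congr 1
    push_cast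
    ring
  · apply Set.Finite.subset (Set.finite_singleton (-(n + k)))
    intro j hj
    simp only [Function.mem_support] at hj
    by_contra h
    exact hj (if_neg h)
  · apply Set.Finite.subset (Set.finite_singleton k)
    intro j hj
    simp only [Function.mem_support] at hj
    by_contra h
    exact hj (if_neg h)

lemma BJJ (hcomm : ∀ n m : ℤ, J n * J m - J m * J n =
      if n + m = 0 then (n : ℂ) • (1 : Module.End ℂ V) else 0)
    (hloc : ∀ v : V, ∃ N : ℕ, ∀ n : ℤ, (N : ℤ) ≤ n → J n v = 0)
    (n a b : ℤ) (v : V) :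
    Bop J n (J a (J b v)) - J a (J b (Bop J n v)) =
      (-2 * a : ℂ) • J (n + a) (J b v) + (-2 * b : ℂ) • J a (J (n + b) v) := by
  have h1 := BJ hcomm hloc n a (J b v)
  have h2 := congrArg (J a) (BJ hcomm hloc n b v)
  rw [map_sub, map_smul] at h2
  calc Bop J n (J a (J b v)) - J a (J b (Bop J n v))
      = (Bop J n (J a (J b v)) - J a (Bop J n (J b v)))
        + (J a (Bop J n (J b v)) - J a (J b (Bop J n v))) := by abel
    _ = (-2 * a : ℂ) • J (n + a) (J b v) + (-2 * b : ℂ) • J a (J (n + b) v) := by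
        rw [h1, h2]

lemma BNO (hcomm : ∀ n m : ℤ, J n * J m - J m * J n =
      if n + m = 0 then (n : ℂ) • (1 : Module.End ℂ V) else 0)
    (hloc : ∀ v : V, ∃ N : ℕ, ∀ n : ℤ, (N : ℤ) ≤ n → J n v = 0)
    (n a b : ℤ) (v : V) :
    Bop J n (normalOrder J a b v) - normalOrder J a b (Bop J n v) =
      (-2 * a : ℂ) • J (n + a) (J b v) + (-2 * b : ℂ) • J a (J (n + b) v) := by
  by_cases hab : a ≤ b
  · rw [normalOrder, if_pos hab, Module.End.mul_apply, Module.End.mul_apply]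
    exact BJJ hcomm hloc n a b v
  · rw [normalOrder, if_neg hab, Module.End.mul_apply, Module.End.mul_apply,
      BJJ hcomm hloc n b a v]
    rw [Jcomm hcomm (n + a) b v, Jcomm hcomm a (n + b) v]
    by_cases hz : n + a + b = 0
    · rw [if_pos (by omega : n + a + b = 0), if_pos (by omega : a + (n + b) = 0)]
      have hc : (n : ℂ) + a + b = 0 := by exact_mod_cast congrArg (Int.cast : ℤ → ℂ) hz
      match_scalars <;>
        (first
          | linear_combination (2 : ℂ) * (a : ℂ) * hc
          | linear_combination (4 : ℂ) * (a : ℂ) * hc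
          | linear_combination (-2 : ℂ) * (a : ℂ) * hc
          | ring)
    · rw [if_neg (by omega : ¬ n + a + b = 0), if_neg (by omega : ¬ a + (n + b) = 0)]
      module

lemma helperG (k : ℕ) : (∑ j ∈ Finset.range k, (j : ℂ)) * 2 = (k : ℂ) ^ 2 - k := by
  induction k with
  | zero => simp
  | succ k ih =>
    rw [Finset.sum_range_succ, add_mul, ih]
    push_cast
    ring

lemma helperT (k : ℕ) :
    (∑ j ∈ Finset.range k, (j : ℂ) * ((k : ℂ) - j)) * 6 = (k : ℂ) ^ 3 - k := by
  induction k with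
  | zero => simp
  | succ k ih =>
    rw [Finset.sum_range_succ]
    have e : ∀ j ∈ Finset.range k, (j : ℂ) * (((k : ℕ) + 1 : ℕ) : ℂ) - (j:ℂ) * (j:ℂ) =
        (j : ℂ) * ((k : ℂ) - j) + j := by
      intro j _
      push_cast
      ring
    have : (∑ j ∈ Finset.range k, (j : ℂ) * ((((k : ℕ) + 1 : ℕ) : ℂ) - j))
        = (∑ j ∈ Finset.range k, (j : ℂ) * ((k : ℂ) - j)) + ∑ j ∈ Finset.range k, (j : ℂ) := by
      rw [← Finset.sum_add_distrib]
      refine Finset.sum_congr rfl fun j hj => ?_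
      push_cast
      ring
    rw [this]
    have hg := helperG k
    push_cast
    push_cast at ih hg
    linear_combination ih + 3 * hg

lemma CS (n : ℤ) :
    ∑ᶠ j : ℤ, ((j * (n - j) : ℤ) : ℂ) * ((if j < n then 1 else 0) - (if j < 0 then 1 else 0))
      = ((n : ℂ) ^ 3 - n) / 6 := by
  rcases le_or_gt 0 n with hn | hn
  · lift n to ℕ using hn with k
    set f : ℤ → ℂ := fun j => ((j * ((k : ℤ) - j) : ℤ) : ℂ) *
      ((if j < (k : ℤ) then 1 else 0) - (if j < 0 then 1 else 0)) with hf
    have hsub : Function.support f ⊆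
        ↑(Finset.image (fun i : ℕ => (i : ℤ)) (Finset.range k)) := by
      intro j hj
      simp only [Function.mem_support, hf] at hj
      have hj' : 0 ≤ j ∧ j < (k : ℤ) := by
        by_contra hcon
        apply hj
        have hiff : (j < (k : ℤ)) ↔ (j < 0) := by omega
        rw [if_congr hiff rfl rfl, sub_self, mul_zero]
      simp only [Finset.coe_image, Finset.coe_range, Set.mem_image, Set.mem_Iio]
      exact ⟨j.toNat, by omega, by omega⟩
    rw [finsum_eq_sum_of_support_subset f hsub,
      Finset.sum_image (by intro x _ y _ h; simp only at h; exact_mod_cast h)]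
    have hterm : ∀ i ∈ Finset.range k, f (i : ℤ) = (i : ℂ) * ((k : ℂ) - i) := by
      intro i hi
      simp only [Finset.mem_range] at hi
      simp only [hf]
      rw [if_pos (by exact_mod_cast hi), if_neg (by omega)]
      push_cast
      ring
    rw [Finset.sum_congr rfl hterm]
    have hT := helperT k
    field_simp
    linear_combination hT
  · obtain ⟨M, hM⟩ : ∃ M : ℕ, (M : ℤ) = -n := ⟨(-n).toNat, by omega⟩
    have hMc : (n : ℂ) = -(M : ℂ) := by
      have : ((M : ℤ) : ℂ) = ((-n : ℤ) : ℂ) := by exact_mod_cast congrArg (Int.cast : ℤ → ℂ) hM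
      push_cast at this
      linear_combination this
    set g : ℕ → ℂ := fun j => (j : ℂ) * ((M : ℂ) - j) with hg
    set f : ℤ → ℂ := fun j => ((j * (n - j) : ℤ) : ℂ) *
      ((if j < n then 1 else 0) - (if j < 0 then 1 else 0)) with hf
    have hsub : Function.support f ⊆
        ↑(Finset.image (fun i : ℕ => -(i : ℤ) - 1) (Finset.range M)) := by
      intro j hj
      simp only [Function.mem_support, hf] at hj
      have hj' : n ≤ j ∧ j < 0 := by
        by_contra hcon
        apply hj
        have hiff : (j < n) ↔ (j < 0) := by omega
        rw [if_congr hiff rfl rfl, sub_self, mul_zero]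
      simp only [Finset.coe_image, Finset.coe_range, Set.mem_image, Set.mem_Iio]
      exact ⟨(-j - 1).toNat, by omega, by omega⟩
    rw [finsum_eq_sum_of_support_subset f hsub,
      Finset.sum_image (by intro x _ y _ h; simp only at h; omega)]
    have hterm : ∀ i ∈ Finset.range M, f (-(i : ℤ) - 1) = -(g (i + 1)) := by
      intro i hi
      simp only [Finset.mem_range] at hi
      simp only [hf, hg]
      rw [if_neg (by omega), if_pos (by omega)]
      push_cast
      rw [hMc]
      ring
    rw [Finset.sum_congr rfl hterm, Finset.sum_neg_distrib]
    have hshift : ∑ i ∈ Finset.range M, g (i + 1) = ∑ j ∈ Finset.range M, g j := by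
      have h1 := Finset.sum_range_succ' g M
      have h2 := Finset.sum_range_succ g M
      have hg0 : g 0 = 0 := by simp [hg]
      have hgM : g M = 0 := by simp [hg]
      rw [h2, hg0, hgM, add_zero] at h1
      linear_combination -h1
    rw [hshift]
    have hT := helperT M
    rw [hMc]
    simp only [hg]
    linear_combination (-1/6 : ℂ) * hT

lemma no_congr {a a' b b' : ℤ} (ha : a = a') (hb : b = b') (v : V) :
    normalOrder J a b v = normalOrder J a' b' v := by rw [ha, hb]

lemma BB (hcomm : ∀ n m : ℤ, J n * J m - J m * J n =
      if n + m = 0 then (n : ℂ) • (1 : Module.End ℂ V) else 0)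
    (hloc : ∀ v : V, ∃ N : ℕ, ∀ n : ℤ, (N : ℤ) ≤ n → J n v = 0)
    (n m : ℤ) (v : V) :
    Bop J n (Bop J m v) - Bop J m (Bop J n v) =
      (2 * ((n : ℂ) - m)) • Bop J (n + m) v +
        (if n + m = 0 then (((n : ℂ) ^ 3 - n) / 3) else 0) • v := by
  classical
  set h : ℤ → V := fun k => normalOrder J (-k) (k + (n + m)) v with hh
  have hsupp : (Function.support h).Finite := no_supp hloc (n + m) v
  set c : ℤ → ℂ := fun j => if n + m = 0 then
      ((j * (n - j) : ℤ) : ℂ) * ((if j < n then 1 else 0) - (if j < 0 then 1 else 0))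
    else 0 with hc
  have hcfin : (Function.support c).Finite := by
    by_cases hnm : n + m = 0
    · apply Set.Finite.subset (Set.finite_Icc (-(|n| + 1)) (|n| + 1))
      rw [Function.support_subset_iff']
      intro j hj
      simp only [Set.mem_Icc, not_and_or, not_le] at hj
      have habs1 : -|n| ≤ n := neg_abs_le n
      have habs2 : n ≤ |n| := le_abs_self n
      have hiff : (j < n) ↔ (j < 0) := by omega
      simp only [hc, if_pos hnm, if_congr hiff (Eq.refl (1:ℂ)) (Eq.refl (0:ℂ)), sub_self,
        mul_zero]
    · apply Set.Finite.subset Set.finite_empty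
      intro j hj
      exact absurd (if_neg hnm) hj
  have key : ∀ j : ℤ,
      Bop J n (normalOrder J (-j) (j + m) v) - normalOrder J (-j) (j + m) (Bop J n v)
        = ((2 * (j : ℂ)) • h (j - n) - (2 * ((j : ℂ) + m)) • h j) + (2 * c j) • v := by
    intro j
    rw [BNO hcomm hloc n (-j) (j + m) v,
      prod_no hcomm (show (n + -j) + (j + m) = n + m by ring) v,
      prod_no hcomm (show (-j) + (n + (j + m)) = n + m by ring) v]
    have h1 : normalOrder J (n + -j) (j + m) v = h (j - n) := by
      simp only [hh]
      exact no_congr (by ring) (by ring) v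
    have h2 : normalOrder J (-j) (n + (j + m)) v = h j := by
      simp only [hh]
      exact no_congr (by ring) (by ring) v
    rw [h1, h2]
    simp only [hc]
    by_cases hnm : n + m = 0
    · have hcC : (n : ℂ) + m = 0 := by exact_mod_cast congrArg (Int.cast : ℤ → ℂ) hnm
      simp only [if_pos hnm, true_and]
      have hm : m = -n := by omega
      subst hm
      split_ifs <;>
        first
          | (exfalso; omega)
          | (push_cast; match_scalars <;> ring)
    · rw [if_neg (fun hco => hnm hco.1), if_neg (fun hco => hnm hco.1), if_neg hnm]
      push_cast
      module
  have e1 : Bop J n (Bop J m v) = ∑ᶠ j : ℤ, Bop J n (normalOrder J (-j) (j + m) v) :=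
    AddMonoidHom.map_finsum (AddMonoidHom.mk' (Bop J n) (Bop_add hloc n)) (no_supp hloc m v)
  have e2 : Bop J m (Bop J n v) = ∑ᶠ j : ℤ, normalOrder J (-j) (j + m) (Bop J n v) := rfl
  -- support lemmas for the three families
  have s1 : (Function.support fun j : ℤ => (2 * (j : ℂ)) • h (j - n)).Finite := by
    apply Set.Finite.subset (hsupp.image (fun x => x + n))
    intro j hj
    simp only [Function.mem_support] at hj
    refine ⟨j - n, fun h0 => hj ?_, by ring⟩
    rw [h0, smul_zero]
  have s1' : (Function.support fun j : ℤ => (2 * ((j : ℂ) + n)) • h j).Finite := by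
    apply hsupp.subset
    intro j hj
    simp only [Function.mem_support] at hj ⊢
    intro h0
    exact hj (by rw [h0, smul_zero])
  have s2 : (Function.support fun j : ℤ => (2 * ((j : ℂ) + m)) • h j).Finite := by
    apply hsupp.subset
    intro j hj
    simp only [Function.mem_support] at hj ⊢
    intro h0
    exact hj (by rw [h0, smul_zero])
  have s12 : (Function.support fun j : ℤ =>
      (2 * (j : ℂ)) • h (j - n) - (2 * ((j : ℂ) + m)) • h j).Finite := by
    apply Set.Finite.subset (s1.union s2)
    intro j hj
    simp only [Function.mem_support] at hj
    by_contra hco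
    simp only [Set.mem_union, Function.mem_support, not_or, not_not] at hco
    rw [hco.1, hco.2, sub_zero] at hj
    exact hj rfl
  have s3 : (Function.support fun j : ℤ => (2 * c j) • v).Finite := by
    apply hcfin.subset
    intro j hj
    simp only [Function.mem_support] at hj ⊢
    intro h0
    exact hj (by rw [h0, mul_zero, zero_smul])
  have s3' : (Function.support fun j : ℤ => 2 * c j).Finite := by
    apply hcfin.subset
    intro j hj
    simp only [Function.mem_support] at hj ⊢
    intro h0
    exact hj (by rw [h0, mul_zero])
  rw [e1, e2, ← finsum_sub_distrib ?hA ?hB]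
  case hA =>
    apply Set.Finite.subset (no_supp hloc m v)
    intro j hj
    simp only [Function.mem_support] at hj ⊢
    intro h0
    exact hj (by rw [h0, Bop_zero])
  case hB =>
    apply Set.Finite.subset (no_supp hloc m (Bop J n v))
    intro j hj
    exact hj
  rw [finsum_congr key, finsum_add_distrib s12 s3, finsum_sub_distrib s1 s2]
  -- reindex the first sum
  have hre : (∑ᶠ j : ℤ, (2 * (j : ℂ)) • h (j - n))
      = ∑ᶠ j : ℤ, (2 * ((j : ℂ) + n)) • h j := by
    apply finsum_eq_of_bijective (fun i : ℤ => i - n)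
    · constructor
      · intro x y hxy
        dsimp only at hxy
        omega
      · intro y
        exact ⟨y + n, by dsimp only; omega⟩
    · intro x
      show (2 * (x : ℂ)) • h (x - n) = (2 * (((x - n : ℤ) : ℂ) + n)) • h (x - n)
      rw [show (2 * (x : ℂ)) = 2 * (((x - n : ℤ) : ℂ) + n) by push_cast; ring]
  rw [hre]
  have hcomb : (∑ᶠ j : ℤ, (2 * ((j : ℂ) + n)) • h j) - ∑ᶠ j : ℤ, (2 * ((j : ℂ) + m)) • h j
      = (2 * ((n : ℂ) - m)) • Bop J (n + m) v := by
    rw [← finsum_sub_distrib s1' s2]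
    have : ∀ j : ℤ, (2 * ((j : ℂ) + n)) • h j - (2 * ((j : ℂ) + m)) • h j
        = (2 * ((n : ℂ) - m)) • h j := by
      intro j
      rw [← sub_smul]
      congr 1
      ring
    rw [finsum_congr this, ← smul_finsum' _ hsupp]
    rfl
  rw [hcomb]
  have hcent : (∑ᶠ j : ℤ, (2 * c j) • v)
      = (if n + m = 0 then (((n : ℂ) ^ 3 - n) / 3) else 0) • v := by
    rw [← finsum_smul' s3']
    congr 1
    rw [← mul_finsum c 2]
    by_cases hnm : n + m = 0
    · rw [if_pos hnm]
      have : (∑ᶠ j : ℤ, c j) = ((n : ℂ) ^ 3 - n) / 6 := by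
        rw [finsum_congr (fun j => if_pos hnm : ∀ j : ℤ, c j = _)]
        exact CS n
      rw [this]
      ring
    · rw [if_neg hnm]
      have : (∑ᶠ j : ℤ, c j) = 0 := by
        rw [finsum_congr (fun j => if_neg hnm : ∀ j : ℤ, c j = _)]
        exact finsum_zero
      rw [this, mul_zero]
  rw [hcent]

lemma ite_smul_zero (P : Prop) [Decidable P] (a : ℂ) (w : V) :
    (if P then a • w else 0) = (if P then a else (0 : ℂ)) • w := by
  split_ifs <;> simp

end Aux

/-- The oscillator Virasoro operator
`L_n v = δ_{n,0} (λ²/2) v + (1/2) Σ_{j ∈ ℤ} :J_{-j} J_{j+n}: v + iλn J_n v`. -/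
noncomputable def oscL {V : Type*} [AddCommGroup V] [Module ℂ V]
    (J : ℤ → Module.End ℂ V) (l : ℝ) (n : ℤ) (v : V) : V :=
  (if n = 0 then (((l ^ 2 / 2 : ℝ) : ℂ)) • v else 0)
    + (1 / 2 : ℂ) • (∑ᶠ j : ℤ, normalOrder J (-j) (j + n) v)
    + (Complex.I * (l : ℂ) * (n : ℂ)) • J n v

/-- The oscillator operators satisfy the Virasoro commutation relations with
central charge `c = 1 + 12λ²`. -/
theorem oscL_virasoro_relations {V : Type*} [AddCommGroup V] [Module ℂ V]
    (l q : ℝ) (J : ℤ → Module.End ℂ V)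
    (hJ0 : J 0 = (q : ℂ) • (1 : Module.End ℂ V))
    (hcomm : ∀ n m : ℤ, J n * J m - J m * J n =
      if n + m = 0 then (n : ℂ) • (1 : Module.End ℂ V) else 0)
    (hloc : ∀ v : V, ∃ N : ℕ, ∀ n : ℤ, (N : ℤ) ≤ n → J n v = 0) :
    ∀ (n m : ℤ) (v : V),
      oscL J l n (oscL J l m v) - oscL J l m (oscL J l n v) =
        ((n : ℂ) - (m : ℂ)) • oscL J l (n + m) v +
          (if n + m = 0 then
              (((n : ℂ) ^ 3 - (n : ℂ)) / 12) * (1 + 12 * (l : ℂ) ^ 2)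
            else 0) • v := by
  intro n m v
  have oscL_eq : ∀ (k : ℤ) (w : V), oscL J l k w
      = (if k = 0 then (((l ^ 2 / 2 : ℝ) : ℂ)) else 0) • w + (1 / 2 : ℂ) • Bop J k w
        + (Complex.I * (l : ℂ) * (k : ℂ)) • J k w := by
    intro k w
    rw [oscL, ite_smul_zero]
    rfl
  by_cases hnm : n + m = 0
  · have hm : m = -n := by omega
    subst hm
    have eBB := BB hcomm hloc n (-n) v
    have eBJ := BJ hcomm hloc n (-n) v
    have eJB := BJ hcomm hloc (-n) n v
    have eJJ := Jcomm hcomm n (-n) v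
    rw [show (-n) + n = n + -n from add_comm (-n) n] at eJB
    rw [sub_eq_iff_eq_add] at eBB eBJ eJB
    simp only [add_neg_cancel, if_pos rfl, reduceIte] at eBB eBJ eJB eJJ ⊢
    simp only [oscL_eq]
    simp only [add_neg_cancel, reduceIte]
    simp only [Bop_add hloc, Bop_smul hloc, map_add, map_smul]
    rw [eBB, eBJ, eJB, eJJ]
    match_scalars
    any_goals (push_cast; ring)
    push_cast
    linear_combination (-(l : ℂ) ^ 2 * (n : ℂ) ^ 3) * Complex.I_sq
  · have eBB := BB hcomm hloc n m v
    have eBJ := BJ hcomm hloc n m v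
    have eJB := BJ hcomm hloc m n v
    have eJJ := Jcomm hcomm n m v
    rw [show m + n = n + m from add_comm m n] at eJB
    rw [sub_eq_iff_eq_add] at eBB eBJ eJB
    simp only [if_neg hnm] at eBB eJJ ⊢
    simp only [oscL_eq]
    simp only [if_neg hnm]
    simp only [Bop_add hloc, Bop_smul hloc, map_add, map_smul]
    rw [eBB, eBJ, eJB, eJJ]
    match_scalars <;> (push_cast; ring)
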